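/- Let I_1, ..., I_m be monomial ideals in R = k[x_1,...,x_d] and let l be the largest exponent of a variable occurring in any of their generating sets. Then for any variable x and any n ≥ 1, (∑_j I_j^n) : x^{ln} = ∑_j (I_j^n : x^{ln}), and I_j^n : x^{ln} = (I_j : x^l)^n for each j. -/

import Mathlib

open MvPolynomial Pointwise

/-- `n`-fold Minkowski sum of a set in an additive commutative monoid. -/
def sumSet {M : Type*} [AddCommMonoid M] : ℕ → Set M → Set M
  | 0, _ => {0}
  | n + 1, S => sumSet n S + S

section Aux

variable {σ : Type*} {R : Type*} [CommRing R]

lemma image_monomial_add (A B : Set (σ →₀ ℕ)) :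
    (fun s => monomial s (1 : R)) '' (A + B) =
      ((fun s => monomial s (1 : R)) '' A) * ((fun s => monomial s (1 : R)) '' B) := by
  ext p
  constructor
  · rintro ⟨s, hs, rfl⟩
    obtain ⟨a, ha, b, hb, rfl⟩ := Set.mem_add.mp hs
    exact ⟨monomial a 1, ⟨a, ha, rfl⟩, monomial b 1, ⟨b, hb, rfl⟩,
      by simp [monomial_mul]⟩
  · rintro ⟨_, ⟨a, ha, rfl⟩, _, ⟨b, hb, rfl⟩, rfl⟩
    exact ⟨a + b, Set.add_mem_add ha hb, by simp [monomial_mul]⟩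

lemma span_image_sumSet (S : Set (σ →₀ ℕ)) (n : ℕ) :
    Ideal.span ((fun s => monomial s (1 : R)) '' S) ^ n =
      Ideal.span ((fun s => monomial s (1 : R)) '' sumSet n S) := by
  induction n with
  | zero => simp [sumSet, Ideal.span_singleton_one]
  | succ n ih =>
    rw [pow_succ, ih, Ideal.span_mul_span', ← image_monomial_add]
    rfl

lemma mem_sumSet_bound {S : Set (σ →₀ ℕ)} {x : σ} {c : ℕ} (h : ∀ g ∈ S, g x ≤ c) :
    ∀ n, ∀ g ∈ sumSet n S, g x ≤ c * n := by
  intro n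
  induction n with
  | zero =>
    rintro g hg
    simp only [sumSet, Set.mem_singleton_iff] at hg
    simp [hg]
  | succ n ih =>
    rintro g hg
    obtain ⟨a, ha, b, hb, rfl⟩ := Set.mem_add.mp hg
    have : (a + b) x = a x + b x := Finsupp.add_apply a b x
    rw [this, Nat.mul_succ]
    exact Nat.add_le_add (ih a ha) (h b hb)

lemma erase_image_add (x : σ) (A B : Set (σ →₀ ℕ)) :
    Finsupp.erase x '' (A + B) = Finsupp.erase x '' A + Finsupp.erase x '' B := by
  ext p
  constructor
  · rintro ⟨s, hs, rfl⟩
    obtain ⟨a, ha, b, hb, rfl⟩ := Set.mem_add.mp hs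
    exact Set.mem_add.mpr ⟨_, ⟨a, ha, rfl⟩, _, ⟨b, hb, rfl⟩, (Finsupp.erase_add x a b).symm⟩
  · intro hp
    obtain ⟨_, ⟨a, ha, rfl⟩, _, ⟨b, hb, rfl⟩, rfl⟩ := Set.mem_add.mp hp
    exact ⟨a + b, Set.add_mem_add ha hb, Finsupp.erase_add x a b⟩

lemma erase_image_sumSet (x : σ) (S : Set (σ →₀ ℕ)) (n : ℕ) :
    Finsupp.erase x '' sumSet n S = sumSet n (Finsupp.erase x '' S) := by
  induction n with
  | zero => simp [sumSet, Finsupp.erase_zero]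
  | succ n ih =>
    show Finsupp.erase x '' (sumSet n S + S) = sumSet n _ + _
    rw [erase_image_add, ih]

lemma le_add_single_iff {g μ : σ →₀ ℕ} {x : σ} {c : ℕ} (hg : g x ≤ c) :
    g ≤ μ + Finsupp.single x c ↔ g.erase x ≤ μ := by
  rw [Finsupp.le_def, Finsupp.le_def]
  constructor
  · intro h v
    rcases eq_or_ne v x with rfl | hv
    · simp [Finsupp.erase_same]
    · have := h v
      rw [Finsupp.add_apply, Finsupp.single_eq_of_ne' (Ne.symm hv), add_zero] at this
      rwa [Finsupp.erase_ne hv]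
  · intro h v
    rcases eq_or_ne v x with rfl | hv
    · rw [Finsupp.add_apply, Finsupp.single_eq_same]
      exact le_trans hg (Nat.le_add_left _ _)
    · have := h v
      rw [Finsupp.erase_ne hv] at this
      rw [Finsupp.add_apply, Finsupp.single_eq_of_ne' (Ne.symm hv), add_zero]
      exact this

lemma mul_monomial_mem_span_iff {r : MvPolynomial σ R} {s : σ →₀ ℕ} {T : Set (σ →₀ ℕ)} :
    r * monomial s 1 ∈ Ideal.span ((fun t => monomial t (1 : R)) '' T) ↔
      ∀ μ ∈ r.support, ∃ g ∈ T, g ≤ μ + s := by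
  rw [mem_ideal_span_monomial_image]
  constructor
  · intro H μ hμ
    refine H (μ + s) ?_
    rw [mem_support_iff, coeff_mul_monomial, mul_one]
    exact mem_support_iff.mp hμ
  · intro H ν hν
    rw [mem_support_iff, coeff_mul_monomial'] at hν
    by_cases hs : s ≤ ν
    · rw [if_pos hs, mul_one] at hν
      obtain ⟨g, hg, hle⟩ := H (ν - s) (mem_support_iff.mpr hν)
      exact ⟨g, hg, by rwa [tsub_add_cancel_of_le hs] at hle⟩
    · rw [if_neg hs] at hν
      exact absurd rfl hν

lemma colon_span_monomial (T : Set (σ →₀ ℕ)) (x : σ) (c : ℕ)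
    (hT : ∀ g ∈ T, g x ≤ c) :
    (Ideal.span ((fun t => monomial t (1 : R)) '' T)).colon (Ideal.span {X x ^ c} : Ideal (MvPolynomial σ R)) =
      Ideal.span ((fun t => monomial t (1 : R)) '' (Finsupp.erase x '' T)) := by
  ext r
  rw [Ideal.mem_colon_span_singleton, X_pow_eq_monomial, mul_monomial_mem_span_iff,
    mem_ideal_span_monomial_image]
  constructor
  · intro H μ hμ
    obtain ⟨g, hg, hle⟩ := H μ hμ
    exact ⟨g.erase x, Set.mem_image_of_mem _ hg, (le_add_single_iff (hT g hg)).mp hle⟩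
  · intro H μ hμ
    obtain ⟨g', ⟨g, hg, rfl⟩, hle⟩ := H μ hμ
    exact ⟨g, hg, (le_add_single_iff (hT g hg)).mpr hle⟩

lemma sum_span_eq_span_biUnion {ι : Type*} (t : Finset ι) (f : ι → Set R) :
    ∑ j ∈ t, Ideal.span (f j) = Ideal.span (⋃ j ∈ t, f j) := by
  classical
  induction t using Finset.induction_on with
  | empty => simp
  | insert _ _ ha ih =>
    rw [Finset.sum_insert ha, ih, Finset.set_biUnion_insert, Ideal.span_union,
      Submodule.add_eq_sup]

end Aux

/-- For monomial ideals `I_1, ..., I_m` with all exponents bounded by `l`, a variable `x`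
and `n ≥ 1`: `(∑_j I_j^n) : x^{ln} = ∑_j (I_j^n : x^{ln})` and
`I_j^n : x^{ln} = (I_j : x^l)^n`. -/
theorem colon_of_sum_of_powers_of_monomial_ideals
    {k : Type*} [Field k] {d m : ℕ}
    (I : Fin m → Ideal (MvPolynomial (Fin d) k))
    (G : Fin m → Finset (Fin d →₀ ℕ))
    (hI : ∀ j, I j = Ideal.span ((fun s => monomial s (1 : k)) ''
      ((G j : Finset (Fin d →₀ ℕ)) : Set (Fin d →₀ ℕ))))
    (l : ℕ) (hl : l = Finset.univ.sup fun j : Fin m =>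
      (G j).sup fun g => Finset.univ.sup fun v => g v)
    (x : Fin d) (n : ℕ) (hn : 1 ≤ n) :
    (∑ j, I j ^ n).colon (Ideal.span {X x ^ (l * n)} : Ideal (MvPolynomial (Fin d) k)) =
      ∑ j, (I j ^ n).colon (Ideal.span {X x ^ (l * n)} : Ideal (MvPolynomial (Fin d) k)) ∧
    ∀ j, (I j ^ n).colon (Ideal.span {X x ^ (l * n)} : Ideal (MvPolynomial (Fin d) k)) =
      ((I j).colon (Ideal.span {X x ^ l} : Ideal (MvPolynomial (Fin d) k))) ^ n := by
  have hb : ∀ j, ∀ g ∈ ((G j : Finset (Fin d →₀ ℕ)) : Set (Fin d →₀ ℕ)), g x ≤ l := by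
    intro j g hg
    rw [hl]
    refine le_trans ?_ (Finset.le_sup (f := fun j : Fin m =>
      (G j).sup fun g => Finset.univ.sup fun v => g v) (Finset.mem_univ j))
    refine le_trans ?_ (Finset.le_sup (f := fun g : Fin d →₀ ℕ =>
      Finset.univ.sup fun v => g v) (Finset.mem_coe.mp hg))
    exact Finset.le_sup (Finset.mem_univ x)
  have hIn : ∀ j, I j ^ n =
      Ideal.span ((fun s => monomial s (1 : k)) '' sumSet n ((G j : Set (Fin d →₀ ℕ)))) := by
    intro j
    rw [hI j, span_image_sumSet]
  have hbn : ∀ j, ∀ g ∈ sumSet n ((G j : Set (Fin d →₀ ℕ))), g x ≤ l * n :=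
    fun j => mem_sumSet_bound (hb j) n
  have hcn : ∀ j, (I j ^ n).colon (Ideal.span {X x ^ (l * n)} : Ideal (MvPolynomial (Fin d) k)) =
      Ideal.span ((fun s => monomial s (1 : k)) ''
        sumSet n (Finsupp.erase x '' ((G j : Set (Fin d →₀ ℕ))))) := by
    intro j
    rw [hIn j, colon_span_monomial _ x _ (hbn j), erase_image_sumSet]
  have hc1 : ∀ j, (I j).colon (Ideal.span {X x ^ l} : Ideal (MvPolynomial (Fin d) k)) =
      Ideal.span ((fun s => monomial s (1 : k)) ''
        (Finsupp.erase x '' ((G j : Set (Fin d →₀ ℕ))))) := by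
    intro j
    rw [hI j, colon_span_monomial _ x _ (hb j)]
  constructor
  · -- part 1
    have hsum : ∑ j, I j ^ n =
        Ideal.span ((fun s => monomial s (1 : k)) ''
          ⋃ j ∈ (Finset.univ : Finset (Fin m)), sumSet n ((G j : Set (Fin d →₀ ℕ)))) := by
      calc ∑ j, I j ^ n
          = ∑ j, Ideal.span ((fun s => monomial s (1 : k)) ''
              sumSet n ((G j : Set (Fin d →₀ ℕ)))) :=
            Finset.sum_congr rfl fun j _ => hIn j
        _ = Ideal.span (⋃ j ∈ (Finset.univ : Finset (Fin m)),
              (fun s => monomial s (1 : k)) '' sumSet n ((G j : Set (Fin d →₀ ℕ)))) :=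
            sum_span_eq_span_biUnion _ _
        _ = _ := by rw [Set.image_iUnion₂]
    have hbU : ∀ g ∈ ⋃ j ∈ (Finset.univ : Finset (Fin m)),
        sumSet n ((G j : Set (Fin d →₀ ℕ))), g x ≤ l * n := by
      intro g hg
      simp only [Set.mem_iUnion] at hg
      obtain ⟨j, _, hj⟩ := hg
      exact hbn j g hj
    rw [hsum, colon_span_monomial _ x _ hbU]
    calc Ideal.span ((fun s => monomial s (1 : k)) ''
          (Finsupp.erase x '' ⋃ j ∈ (Finset.univ : Finset (Fin m)),
            sumSet n ((G j : Set (Fin d →₀ ℕ)))))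
        = Ideal.span ((fun s => monomial s (1 : k)) ''
            ⋃ j ∈ (Finset.univ : Finset (Fin m)),
              Finsupp.erase x '' sumSet n ((G j : Set (Fin d →₀ ℕ)))) := by
          rw [Set.image_iUnion₂]
      _ = Ideal.span (⋃ j ∈ (Finset.univ : Finset (Fin m)),
            (fun s => monomial s (1 : k)) ''
              (Finsupp.erase x '' sumSet n ((G j : Set (Fin d →₀ ℕ))))) := by
          rw [Set.image_iUnion₂]
      _ = ∑ j, Ideal.span ((fun s => monomial s (1 : k)) ''
            (Finsupp.erase x '' sumSet n ((G j : Set (Fin d →₀ ℕ))))) :=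
          (sum_span_eq_span_biUnion _ _).symm
      _ = ∑ j, (I j ^ n).colon (Ideal.span {X x ^ (l * n)} : Ideal (MvPolynomial (Fin d) k)) := by
          refine Finset.sum_congr rfl fun j _ => ?_
          rw [hcn j, erase_image_sumSet]
  · -- part 2
    intro j
    rw [hcn j, hc1 j, span_image_sumSet]
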